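/- arXiv:2603.15817 — 3 statements merged into one kernel-verified Lean document; each statement's English description precedes it below -/
import Mathlib

section
/- Let t ↦ P_{t,s} and t ↦ P_{t,g} be regular (QMD) submodels through P₀ with scores s and g respectively. Then limsup_{t→0} H(P_{t,s}, P_{t,g}) / |t| ≤ (1/(2√2)) ‖s − g‖_{L₂(P₀)}. -/
/-! STATEMENT 8: the Hellinger gap between two regular (QMD) submodels:
limsup_{t→0} H(P_{t,s}, P_{t,g})/|t| ≤ (1/(2√2)) ‖s − g‖_{L₂(P₀)}. -/

open MeasureTheory Filter Topology Set ENNReal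

namespace Semiparam

variable {Z : Type*} [MeasurableSpace Z]

/-- `p` is a density of `P` with respect to `ν`. -/
def IsDensityOf (ν P : Measure Z) (p : Z → ℝ) : Prop :=
  P = ν.withDensity (fun z => ENNReal.ofReal (p z))

/-- A regular (QMD) parametric submodel through `P0` (which has density `p0` w.r.t. `ν`)
inside the model `model`, with score `s`. -/
structure QMDSubmodel (ν : Measure Z) (model : Set (Measure Z)) (P0 : Measure Z)
    (p0 : Z → ℝ) (s : Z → ℝ) where
  ε : ℝ
  εpos : 0 < ε
  P : ℝ → Measure Z
  p : ℝ → Z → ℝ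
  mem : ∀ t ∈ Set.Ioo (-ε) ε, P t ∈ model
  prob : ∀ t ∈ Set.Ioo (-ε) ε, IsProbabilityMeasure (P t)
  zero : P 0 = P0
  p_zero : p 0 = p0
  p_meas : ∀ t ∈ Set.Ioo (-ε) ε, Measurable (p t)
  density : ∀ t ∈ Set.Ioo (-ε) ε, IsDensityOf ν (P t) (p t)
  score_memLp : MemLp s 2 P0
  score_mean_zero : ∫ z, s z ∂P0 = 0
  qmd : Tendsto (fun t => ∫ z, ((Real.sqrt (p t z) - Real.sqrt (p0 z)) / t
      - (1/2) * s z * Real.sqrt (p0 z)) ^ 2 ∂ν) (𝓝[≠] (0:ℝ)) (𝓝 0)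

/-- The Hellinger distance between two densities. -/
noncomputable def hellingerDist (ν : Measure Z) (p q : Z → ℝ) : ℝ :=
  (1 / Real.sqrt 2) * Real.sqrt (∫ z, (Real.sqrt (p z) - Real.sqrt (q z)) ^ 2 ∂ν)


lemma ofReal_sqrt_sq' (x : ℝ) : ENNReal.ofReal (Real.sqrt x ^ 2) = ENNReal.ofReal x := by
  rcases le_or_gt 0 x with h | h
  · rw [Real.sq_sqrt h]
  · rw [Real.sqrt_eq_zero_of_nonpos h.le]
    simp [ENNReal.ofReal_of_nonpos h.le]

lemma enorm_sqrt_sq' (x : ℝ) : (‖Real.sqrt x‖₊ : ℝ≥0∞) ^ 2 = ENNReal.ofReal x := by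
  have : (‖Real.sqrt x‖₊ : ℝ≥0∞) = ENNReal.ofReal (Real.sqrt x) := by
    rw [← enorm_eq_nnnorm, ← ofReal_norm, Real.norm_of_nonneg (Real.sqrt_nonneg x)]
  rw [this, ← ENNReal.ofReal_pow (Real.sqrt_nonneg x), ofReal_sqrt_sq' x]

lemma enorm_sq_eq' (x : ℝ) : (‖x‖₊ : ℝ≥0∞) ^ 2 = ENNReal.ofReal (x ^ 2) := by
  rw [← enorm_eq_nnnorm, ← ofReal_norm, ← ENNReal.ofReal_pow (norm_nonneg x),
    Real.norm_eq_abs, sq_abs]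

lemma eLpNorm_two_eq {α : Type*} [MeasurableSpace α] (μ : Measure α) (f : α → ℝ) :
    eLpNorm f 2 μ = (∫⁻ x, (‖f x‖₊ : ℝ≥0∞) ^ 2 ∂μ) ^ (1/2 : ℝ) := by
  rw [eLpNorm_eq_lintegral_rpow_enorm_toReal two_ne_zero ENNReal.ofNat_ne_top]
  norm_num
  rfl

lemma sqrt_integral_sq {α : Type*} [MeasurableSpace α] {μ : Measure α} {f : α → ℝ}
    (hf : MemLp f 2 μ) :
    Real.sqrt (∫ x, f x ^ 2 ∂μ) = (eLpNorm f 2 μ).toReal := by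
  have h1 : ∫ x, f x ^ 2 ∂μ = (∫⁻ x, (‖f x‖₊ : ℝ≥0∞) ^ 2 ∂μ).toReal := by
    rw [integral_eq_lintegral_of_nonneg_ae (ae_of_all _ fun x => sq_nonneg _)
      ((hf.1.aemeasurable.pow_const 2).aestronglyMeasurable)]
    congr 1
    exact lintegral_congr fun x => (enorm_sq_eq' (f x)).symm
  rw [h1, eLpNorm_two_eq, ← ENNReal.toReal_rpow, Real.sqrt_eq_rpow]

lemma aesm_mul_sqrt {ν P0 : Measure Z} {p0 : Z → ℝ}
    (hp0_meas : Measurable p0) (hp0_nonneg : ∀ᵐ z ∂ν, 0 ≤ p0 z)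
    (hp0 : P0 = ν.withDensity (fun z => ENNReal.ofReal (p0 z)))
    {d : Z → ℝ} (hd : AEStronglyMeasurable d P0) :
    AEStronglyMeasurable (fun z => d z * Real.sqrt (p0 z)) ν := by
  have hmeas : Measurable fun z => (p0 z).toNNReal := hp0_meas.real_toNNReal
  have hm : AEStronglyMeasurable (fun z => ((p0 z).toNNReal : ℝ) • d z) ν := by
    rw [← aestronglyMeasurable_withDensity_iff hmeas]
    have : (ν.withDensity fun x => ((p0 x).toNNReal : ℝ≥0∞)) = P0 := by
      rw [hp0]; rfl
    rw [this]; exact hd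
  have hinv : Measurable fun z => (Real.sqrt (p0 z))⁻¹ :=
    (Measurable.sqrt hp0_meas).inv
  refine (hm.mul hinv.aestronglyMeasurable).congr ?_
  filter_upwards [hp0_nonneg] with z hz
  simp only [Pi.mul_apply, smul_eq_mul, Real.coe_toNNReal _ hz]
  rw [mul_right_comm, ← div_eq_mul_inv, Real.div_sqrt, mul_comm]

lemma eLpNorm_mul_sqrt {ν P0 : Measure Z} {p0 : Z → ℝ}
    (hp0_meas : Measurable p0) (hp0_nonneg : ∀ᵐ z ∂ν, 0 ≤ p0 z)
    (hp0 : P0 = ν.withDensity (fun z => ENNReal.ofReal (p0 z)))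
    {d : Z → ℝ} (hd : AEStronglyMeasurable d P0) :
    eLpNorm (fun z => d z * Real.sqrt (p0 z)) 2 ν = eLpNorm d 2 P0 := by
  rw [eLpNorm_two_eq, eLpNorm_two_eq]
  congr 1
  have hg : AEMeasurable (fun z => (‖d z‖₊ : ℝ≥0∞) ^ 2) P0 :=
    hd.enorm.pow_const 2
  have h1 : ∫⁻ z, (‖d z‖₊ : ℝ≥0∞) ^ 2 ∂P0
      = ∫⁻ z, ENNReal.ofReal (p0 z) * (‖d z‖₊ : ℝ≥0∞) ^ 2 ∂ν := by
    rw [hp0] at hg ⊢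
    have hf : AEMeasurable (fun z => ENNReal.ofReal (p0 z)) ν :=
      (ENNReal.measurable_ofReal.comp hp0_meas).aemeasurable
    rw [lintegral_withDensity_eq_lintegral_mul₀' hf hg]
    rfl
  rw [h1]
  apply lintegral_congr_ae
  filter_upwards [hp0_nonneg] with z hz
  rw [nnnorm_mul, ENNReal.coe_mul, mul_pow, enorm_sqrt_sq', mul_comm]

lemma memLp_sqrt_density {ν P : Measure Z} {p : Z → ℝ}
    (hp : Measurable p) (hd : P = ν.withDensity (fun z => ENNReal.ofReal (p z)))
    (hP : IsProbabilityMeasure P) :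
    MemLp (fun z => Real.sqrt (p z)) 2 ν := by
  have hm : AEStronglyMeasurable (fun z => Real.sqrt (p z)) ν :=
    hp.sqrt.aestronglyMeasurable
  rw [memLp_two_iff_integrable_sq hm]
  refine ⟨(hp.sqrt.pow_const 2).aestronglyMeasurable, ?_⟩
  rw [hasFiniteIntegral_iff_ofReal (ae_of_all _ fun z => sq_nonneg _)]
  have : ∫⁻ z, ENNReal.ofReal (Real.sqrt (p z) ^ 2) ∂ν = P Set.univ := by
    rw [hd, withDensity_apply _ MeasurableSet.univ, setLIntegral_univ]
    exact lintegral_congr fun z => ofReal_sqrt_sq' (p z)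
  rw [this, hP.measure_univ]
  exact ENNReal.one_lt_top

theorem hellinger_gap_between_regular_submodels
    (ν : Measure Z) [SigmaFinite ν]
    (model : Set (Measure Z))
    (P0 : Measure Z) [IsProbabilityMeasure P0]
    (p0 : Z → ℝ) (hp0_meas : Measurable p0) (hp0_nonneg : ∀ᵐ z ∂ν, 0 ≤ p0 z)
    (hp0 : IsDensityOf ν P0 p0)
    (s g : Z → ℝ)
    (Ss : QMDSubmodel ν model P0 p0 s)
    (Sg : QMDSubmodel ν model P0 p0 g) :
    Filter.limsup (fun t : ℝ => hellingerDist ν (Ss.p t) (Sg.p t) / |t|) (𝓝[≠] (0:ℝ))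
      ≤ (1 / (2 * Real.sqrt 2)) * Real.sqrt (∫ z, (s z - g z) ^ 2 ∂P0) := by
  classical
  have hp0' : P0 = ν.withDensity (fun z => ENNReal.ofReal (p0 z)) := hp0
  have hw : MemLp (fun z => Real.sqrt (p0 z)) 2 ν :=
    memLp_sqrt_density hp0_meas hp0' inferInstance
  have hdP : MemLp (fun z => s z - g z) 2 P0 := Ss.score_memLp.sub Sg.score_memLp
  have hdwE : eLpNorm (fun z => (s z - g z) * Real.sqrt (p0 z)) 2 ν
      = eLpNorm (fun z => s z - g z) 2 P0 :=
    eLpNorm_mul_sqrt hp0_meas hp0_nonneg hp0' hdP.1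
  have hdw : MemLp (fun z => (s z - g z) * Real.sqrt (p0 z)) 2 ν :=
    ⟨aesm_mul_sqrt hp0_meas hp0_nonneg hp0' hdP.1, by rw [hdwE]; exact hdP.2⟩
  have hsw : MemLp (fun z => s z * Real.sqrt (p0 z)) 2 ν :=
    ⟨aesm_mul_sqrt hp0_meas hp0_nonneg hp0' Ss.score_memLp.1, by
      rw [eLpNorm_mul_sqrt hp0_meas hp0_nonneg hp0' Ss.score_memLp.1]
      exact Ss.score_memLp.2⟩
  have hgw : MemLp (fun z => g z * Real.sqrt (p0 z)) 2 ν :=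
    ⟨aesm_mul_sqrt hp0_meas hp0_nonneg hp0' Sg.score_memLp.1, by
      rw [eLpNorm_mul_sqrt hp0_meas hp0_nonneg hp0' Sg.score_memLp.1]
      exact Sg.score_memLp.2⟩
  set C : ℝ := (1 / (2 * Real.sqrt 2)) * Real.sqrt (∫ z, (s z - g z) ^ 2 ∂P0) with hC_def
  set φ : ℝ → ℝ := fun t =>
    (1/Real.sqrt 2) * Real.sqrt (∫ z, ((Real.sqrt (Ss.p t z) - Real.sqrt (p0 z)) / t
        - (1/2) * s z * Real.sqrt (p0 z)) ^ 2 ∂ν)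
    + (1/Real.sqrt 2) * Real.sqrt (∫ z, ((Real.sqrt (Sg.p t z) - Real.sqrt (p0 z)) / t
        - (1/2) * g z * Real.sqrt (p0 z)) ^ 2 ∂ν)
    + C with hφ_def
  have hφ : Tendsto φ (𝓝[≠] (0:ℝ)) (𝓝 C) := by
    have h1 := (Ss.qmd.sqrt).const_mul (1/Real.sqrt 2)
    have h2 := (Sg.qmd.sqrt).const_mul (1/Real.sqrt 2)
    have h3 := (h1.add h2).add_const C
    rw [hφ_def]
    simpa only [Real.sqrt_zero, mul_zero, zero_add] using h3
  have hev : ∀ᶠ t in 𝓝[≠] (0:ℝ),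
      hellingerDist ν (Ss.p t) (Sg.p t) / |t| ≤ φ t := by
    have hs_mem : ∀ᶠ t in 𝓝[≠] (0:ℝ), t ∈ Set.Ioo (-Ss.ε) Ss.ε :=
      eventually_nhdsWithin_of_eventually_nhds
        (eventually_of_mem (Ioo_mem_nhds (neg_lt_zero.mpr Ss.εpos) Ss.εpos) fun t ht => ht)
    have hg_mem : ∀ᶠ t in 𝓝[≠] (0:ℝ), t ∈ Set.Ioo (-Sg.ε) Sg.ε :=
      eventually_nhdsWithin_of_eventually_nhds
        (eventually_of_mem (Ioo_mem_nhds (neg_lt_zero.mpr Sg.εpos) Sg.εpos) fun t ht => ht)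
    filter_upwards [hs_mem, hg_mem, self_mem_nhdsWithin] with t hts htg ht0'
    have ht0 : t ≠ 0 := ht0'
    have habs : |t| ≠ 0 := abs_ne_zero.mpr ht0
    -- MemLp facts at this t
    have hPs : IsProbabilityMeasure (Ss.P t) := Ss.prob t hts
    have hPg : IsProbabilityMeasure (Sg.P t) := Sg.prob t htg
    have hu : MemLp (fun z => Real.sqrt (Ss.p t z)) 2 ν :=
      memLp_sqrt_density (Ss.p_meas t hts) (Ss.density t hts) hPs
    have hv : MemLp (fun z => Real.sqrt (Sg.p t z)) 2 ν :=
      memLp_sqrt_density (Sg.p_meas t htg) (Sg.density t htg) hPg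
    have hfs : MemLp (fun z => (Real.sqrt (Ss.p t z) - Real.sqrt (p0 z)) / t
        - (1/2) * s z * Real.sqrt (p0 z)) 2 ν := by
      have h1 : MemLp (fun z => t⁻¹ * (Real.sqrt (Ss.p t z) - Real.sqrt (p0 z))) 2 ν :=
        (hu.sub hw).const_mul t⁻¹
      have h2 : MemLp (fun z => (1/2) * (s z * Real.sqrt (p0 z))) 2 ν :=
        hsw.const_mul (1/2)
      have heq : (fun z => (Real.sqrt (Ss.p t z) - Real.sqrt (p0 z)) / t
          - (1/2) * s z * Real.sqrt (p0 z))
          = fun z => t⁻¹ * (Real.sqrt (Ss.p t z) - Real.sqrt (p0 z))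
            - (1/2) * (s z * Real.sqrt (p0 z)) := by
        funext z; ring
      rw [heq]; exact h1.sub h2
    have hfg : MemLp (fun z => (Real.sqrt (Sg.p t z) - Real.sqrt (p0 z)) / t
        - (1/2) * g z * Real.sqrt (p0 z)) 2 ν := by
      have h1 : MemLp (fun z => t⁻¹ * (Real.sqrt (Sg.p t z) - Real.sqrt (p0 z))) 2 ν :=
        (hv.sub hw).const_mul t⁻¹
      have h2 : MemLp (fun z => (1/2) * (g z * Real.sqrt (p0 z))) 2 ν :=
        hgw.const_mul (1/2)
      have heq : (fun z => (Real.sqrt (Sg.p t z) - Real.sqrt (p0 z)) / t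
          - (1/2) * g z * Real.sqrt (p0 z))
          = fun z => t⁻¹ * (Real.sqrt (Sg.p t z) - Real.sqrt (p0 z))
            - (1/2) * (g z * Real.sqrt (p0 z)) := by
        funext z; ring
      rw [heq]; exact h1.sub h2
    have hk : MemLp (fun z => (1/2:ℝ) * ((s z - g z) * Real.sqrt (p0 z))) 2 ν :=
      hdw.const_mul (1/2)
    -- notation
    set fs : Z → ℝ := fun z => (Real.sqrt (Ss.p t z) - Real.sqrt (p0 z)) / t
        - (1/2) * s z * Real.sqrt (p0 z) with hfs_def
    set fg : Z → ℝ := fun z => (Real.sqrt (Sg.p t z) - Real.sqrt (p0 z)) / t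
        - (1/2) * g z * Real.sqrt (p0 z) with hfg_def
    set k : Z → ℝ := fun z => (1/2:ℝ) * ((s z - g z) * Real.sqrt (p0 z)) with hk_def
    set h : Z → ℝ := fun z => (fs z - fg z) + k z with hh_def
    have hh : MemLp h 2 ν := (hfs.sub hfg).add hk
    -- key pointwise identity
    have hkey : (fun z => Real.sqrt (Ss.p t z) - Real.sqrt (Sg.p t z))
        = fun z => t * h z := by
      funext z
      simp only [hh_def, hfs_def, hfg_def, hk_def]
      field_simp
      ring
    -- smul computations
    have hsmul : eLpNorm (fun z => t * h z) 2 ν = (‖t‖₊ : ℝ≥0∞) * eLpNorm h 2 ν := by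
      have := eLpNorm_const_smul (c := t) (f := h) (p := (2:ℝ≥0∞)) (μ := ν)
      simp only [Pi.smul_def, smul_eq_mul] at this; exact this
    have hksmul : eLpNorm k 2 ν
        = (‖(1/2:ℝ)‖₊ : ℝ≥0∞) * eLpNorm (fun z => (s z - g z) * Real.sqrt (p0 z)) 2 ν := by
      have := eLpNorm_const_smul (c := (1/2:ℝ))
        (f := fun z => (s z - g z) * Real.sqrt (p0 z)) (p := (2:ℝ≥0∞)) (μ := ν)
      simp only [hk_def, Pi.smul_def, smul_eq_mul] at this ⊢; exact this
    -- triangle inequality on eLpNorms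
    have htri : eLpNorm h 2 ν ≤ eLpNorm fs 2 ν + eLpNorm fg 2 ν + eLpNorm k 2 ν := by
      calc eLpNorm h 2 ν
          ≤ eLpNorm (fun z => fs z - fg z) 2 ν + eLpNorm k 2 ν :=
            eLpNorm_add_le (hfs.sub hfg).1 hk.1 one_le_two
        _ ≤ (eLpNorm fs 2 ν + eLpNorm fg 2 ν) + eLpNorm k 2 ν :=
            add_le_add (eLpNorm_sub_le hfs.1 hfg.1 one_le_two) le_rfl
    -- pass to toReal
    have hfs_top : eLpNorm fs 2 ν ≠ ⊤ := hfs.2.ne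
    have hfg_top : eLpNorm fg 2 ν ≠ ⊤ := hfg.2.ne
    have hk_top : eLpNorm k 2 ν ≠ ⊤ := hk.2.ne
    have htriR : (eLpNorm h 2 ν).toReal
        ≤ (eLpNorm fs 2 ν).toReal + (eLpNorm fg 2 ν).toReal + (eLpNorm k 2 ν).toReal := by
      have := ENNReal.toReal_mono (by finiteness) htri
      rwa [ENNReal.toReal_add (by finiteness) hk_top,
        ENNReal.toReal_add hfs_top hfg_top] at this
    -- value of k's norm
    have hkR : (eLpNorm k 2 ν).toReal
        = (1/2) * Real.sqrt (∫ z, (s z - g z) ^ 2 ∂P0) := by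
      rw [hksmul, hdwE, ENNReal.toReal_mul, ENNReal.coe_toReal, coe_nnnorm,
        sqrt_integral_sq hdP]
      norm_num
    -- main computation
    have hhd : hellingerDist ν (Ss.p t) (Sg.p t) / |t|
        = (1/Real.sqrt 2) * (eLpNorm h 2 ν).toReal := by
      have huv : MemLp (fun z => Real.sqrt (Ss.p t z) - Real.sqrt (Sg.p t z)) 2 ν :=
        hu.sub hv
      rw [hellingerDist, sqrt_integral_sq huv]
      rw [show (fun z => Real.sqrt ((Ss.p t) z) - Real.sqrt ((Sg.p t) z))
        = fun z => t * h z from hkey]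
      rw [hsmul, ENNReal.toReal_mul, ENNReal.coe_toReal, coe_nnnorm, Real.norm_eq_abs]
      field_simp
    rw [hhd, hφ_def]
    have hsqrt2 : (0:ℝ) ≤ 1/Real.sqrt 2 := by positivity
    calc (1/Real.sqrt 2) * (eLpNorm h 2 ν).toReal
        ≤ (1/Real.sqrt 2) * ((eLpNorm fs 2 ν).toReal + (eLpNorm fg 2 ν).toReal
            + (eLpNorm k 2 ν).toReal) := mul_le_mul_of_nonneg_left htriR hsqrt2
      _ = (1/Real.sqrt 2) * Real.sqrt (∫ z, fs z ^ 2 ∂ν)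
            + (1/Real.sqrt 2) * Real.sqrt (∫ z, fg z ^ 2 ∂ν) + C := by
          rw [← sqrt_integral_sq hfs, ← sqrt_integral_sq hfg, hkR, hC_def]
          have h22 : 1 / (2 * Real.sqrt 2) = (1/Real.sqrt 2) * (1/2) := by
            rw [one_div_mul_eq_div, div_div]
          rw [h22]; ring
  have hnn : ∀ t : ℝ, 0 ≤ hellingerDist ν (Ss.p t) (Sg.p t) / |t| := fun t => by
    apply div_nonneg _ (abs_nonneg t)
    rw [hellingerDist]
    positivity
  calc limsup (fun t : ℝ => hellingerDist ν (Ss.p t) (Sg.p t) / |t|) (𝓝[≠] (0:ℝ))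
      ≤ limsup φ (𝓝[≠] (0:ℝ)) :=
        limsup_le_limsup hev (isCoboundedUnder_le_of_le _ hnn) hφ.isBoundedUnder_le
    _ = C := hφ.limsup_eq


end Semiparam
end

section
/- Suppose: (i) D := m(·;β₀,η₀) is an influence function of β at P₀ (a gradient), i.e. for every regular submodel with score s, (d/dt)β(P_{t,s})|₀ = E₀[D s]; (ii) the map (β,η) ↦ E₀[m(Z;β,η)] is Fréchet differentiable at (β₀,η₀); (iii) there exists a score s ∈ L₂⁰(P₀) proportional to an influence function φ* with E₀[(φ*)²] > 0, realized by a regular submodel t ↦ P_{t,s} along which the coordinate path is differentiable at 0, and along this submodel (d/dt) E₀[m(Z; β(P_{t,s}), η(P_{t,s}))] |_{t=0} = −(d/dt) β(P_{t,s}) |_{t=0}; (iv, local product structure) for every h ∈ Ḣ there exists a regular submodel through P₀ with (d/dt)β(P_t)|₀ = 0 and (d/dt)η(P_t)|₀ = h, and along each such submodel the Gâteaux derivative identity of (iii) holds; and (v) β ↦ E₀[m(Z;β,η₀)] is differentiable at β₀. Then (d/dβ) E₀[m(Z; β, η₀)] |_{β=β₀} = −1. -/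
/-! STATEMENT 11: the negative identity (Lemma 1.3 of van der Laan & Robins):
if D = m(·;β₀,η₀) is a gradient of β at P₀, the expected estimating function is
Fréchet differentiable, a submodel with score proportional to an influence function φ*
with E₀[(φ*)²] > 0 exists realizing the key derivative identity, and local product
structure holds, then (d/dβ) E₀[m(Z;β,η₀)] |_{β=β₀} = −1. -/

open MeasureTheory Filter Topology Set ENNReal

namespace Semiparam

variable {Z : Type*} [MeasurableSpace Z]

/-- Admissible perturbation directions of the nuisance set `ℋ` at `η0`. -/
def admissibleDirections {V : Type*} [NormedAddCommGroup V] [NormedSpace ℝ V]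
    (ℋ : Set V) (η0 : V) : Set V :=
  {h | ∃ ε > 0, ∀ t : ℝ, |t| < ε → η0 + t • h ∈ ℋ}

theorem negative_identity
    {V : Type*} [NormedAddCommGroup V] [NormedSpace ℝ V]
    (ν : Measure Z) [SigmaFinite ν]
    (model : Set (Measure Z))
    (P0 : Measure Z) [IsProbabilityMeasure P0]
    (p0 : Z → ℝ) (hp0_meas : Measurable p0) (hp0_nonneg : ∀ᵐ z ∂ν, 0 ≤ p0 z)
    (hp0 : IsDensityOf ν P0 p0)
    (ℋ : Set V) (β : Measure Z → ℝ) (η : Measure Z → V)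
    (hη : ∀ P ∈ model, η P ∈ ℋ)
    (m : Z → ℝ → V → ℝ) (hm_meas : ∀ b e, Measurable (fun z => m z b e))
    -- (i) D = m(·;β₀,η₀) is a gradient (influence function) of β at P₀
    (hgrad : ∀ (s : Z → ℝ) (S : QMDSubmodel ν model P0 p0 s),
      HasDerivAt (fun t => β (S.P t)) (∫ z, m z (β P0) (η P0) * s z ∂P0) 0)
    -- (ii) Fréchet differentiability of (β,η) ↦ E₀[m(Z;β,η)] at (β₀,η₀)
    (F : ℝ × V → ℝ) (hF : ∀ (b : ℝ) (e : V), F (b, e) = ∫ z, m z b e ∂P0)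
    (DF : ℝ × V →L[ℝ] ℝ) (hDF : HasFDerivAt F DF (β P0, η P0))
    -- (iii) a score proportional to an influence function φ* with E₀[(φ*)²] > 0,
    -- realized by a regular submodel with differentiable coordinate path along which
    -- the key derivative identity holds
    (φstar : Z → ℝ) (hφstar_memLp : MemLp φstar 2 P0)
    (hφstar_mean : ∫ z, φstar z ∂P0 = 0)
    (hφstar_grad : ∀ (s : Z → ℝ) (S : QMDSubmodel ν model P0 p0 s),
      HasDerivAt (fun t => β (S.P t)) (∫ z, φstar z * s z ∂P0) 0)
    (hφstar_pos : 0 < ∫ z, (φstar z) ^ 2 ∂P0)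
    (c : ℝ) (hc : c ≠ 0)
    (Sstar : QMDSubmodel ν model P0 p0 (fun z => c * φstar z))
    (bdot : ℝ) (edot : V)
    (hbdot : HasDerivAt (fun t => β (Sstar.P t)) bdot 0)
    (hedot : HasDerivAt (fun t => η (Sstar.P t)) edot 0)
    (hedot_mem : edot ∈ admissibleDirections ℋ (η P0))
    (hkey : HasDerivAt (fun t => ∫ z, m z (β (Sstar.P t)) (η (Sstar.P t)) ∂P0) (-bdot) 0)
    -- (iv) local product structure for the nuisance directions, with the key
    -- derivative identity along each nuisance coordinate submodel
    (hprod : ∀ h ∈ admissibleDirections ℋ (η P0),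
      ∃ (s : Z → ℝ) (S : QMDSubmodel ν model P0 p0 s),
        HasDerivAt (fun t => β (S.P t)) 0 0 ∧
        HasDerivAt (fun t => η (S.P t)) h 0 ∧
        HasDerivAt (fun t => ∫ z, m z (β (S.P t)) (η (S.P t)) ∂P0) 0 0)
    -- (v) β ↦ E₀[m(Z;β,η₀)] is differentiable at β₀
    (hv : ∃ d : ℝ, HasDerivAt (fun b : ℝ => ∫ z, m z b (η P0) ∂P0) d (β P0)) :
    HasDerivAt (fun b : ℝ => ∫ z, m z b (η P0) ∂P0) (-1) (β P0) := by
  -- bdot = c * ∫ φ*² ≠ 0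
  have hbdot_val : bdot = c * ∫ z, (φstar z) ^ 2 ∂P0 := by
    have h1 := hφstar_grad _ Sstar
    have h2 := hbdot.unique h1
    rw [h2]
    rw [show (fun z => φstar z * (c * φstar z)) = fun z => c * (φstar z) ^ 2 by
      funext z; ring]
    exact integral_const_mul c _
  have hbdot_ne : bdot ≠ 0 := by
    rw [hbdot_val]
    exact mul_ne_zero hc (ne_of_gt hφstar_pos)
  -- chain rule along Sstar: DF (bdot, edot) = -bdot
  have hFeq : ∀ (f : ℝ → Measure Z),
      (fun t => ∫ z, m z (β (f t)) (η (f t)) ∂P0) = fun t => F (β (f t), η (f t)) := by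
    intro f; funext t; rw [hF]
  have hstar : HasDerivAt (fun t => F (β (Sstar.P t), η (Sstar.P t))) (DF (bdot, edot)) 0 := by
    have hDF' : HasFDerivAt F DF (β (Sstar.P 0), η (Sstar.P 0)) := by
      rw [Sstar.zero]; exact hDF
    exact hDF'.comp_hasDerivAt 0 (HasDerivAt.prodMk hbdot hedot)
  have hDF1 : DF (bdot, edot) = -bdot := by
    have := hkey
    rw [hFeq Sstar.P] at this
    exact (this.unique hstar).symm
  -- product structure: DF (0, edot) = 0
  obtain ⟨s, S, hβ0, hη0, hkey0⟩ := hprod edot hedot_mem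
  have hS : HasDerivAt (fun t => F (β (S.P t), η (S.P t))) (DF (0, edot)) 0 := by
    have hDF' : HasFDerivAt F DF (β (S.P 0), η (S.P 0)) := by
      rw [S.zero]; exact hDF
    exact hDF'.comp_hasDerivAt 0 (HasDerivAt.prodMk hβ0 hη0)
  have hDF2 : DF ((0:ℝ), edot) = 0 := by
    rw [hFeq S.P] at hkey0
    exact (hkey0.unique hS).symm
  -- linearity: DF (1,0) = -1
  have hDF3 : DF ((1:ℝ), (0:V)) = -1 := by
    have hsplit : ((bdot, edot) : ℝ × V) = bdot • ((1:ℝ), (0:V)) + ((0:ℝ), edot) := by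
      simp [Prod.ext_iff]
    have : DF (bdot, edot) = bdot * DF ((1:ℝ), (0:V)) + DF ((0:ℝ), edot) := by
      rw [hsplit, map_add, DF.map_smul]; simp
    rw [hDF1, hDF2, add_zero] at this
    have := mul_left_cancel₀ hbdot_ne (by linarith : bdot * DF ((1:ℝ), (0:V)) = bdot * (-1))
    linarith
  -- final composition
  have hcoord : HasDerivAt (fun b : ℝ => ((b, η P0) : ℝ × V)) ((1:ℝ), (0:V)) (β P0) :=
    HasDerivAt.prodMk (hasDerivAt_id (β P0)) (hasDerivAt_const _ _)
  have hfin : HasDerivAt (fun b : ℝ => F (b, η P0)) (DF ((1:ℝ), (0:V))) (β P0) :=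
    hDF.comp_hasDerivAt _ hcoord
  rw [hDF3] at hfin
  have : (fun b : ℝ => ∫ z, m z b (η P0) ∂P0) = fun b => F (b, η P0) := by
    funext b; rw [hF]
  rw [this]
  exact hfin

end Semiparam
end

section
/- Let P₀ be a distribution for Z = (Y, X, A) with |Y| ≤ C_Y almost surely and π(x) := P₀(A=1|X=x) ∈ [ε, 1−ε] almost surely for some ε > 0; set μ_a(x) := E₀[Y|X=x, A=a], β₀ := E₀[μ₁(X) − μ₀(X)]. Then for all P₀,X-essentially bounded functions h₁, h₀, h_π of x, the map t ↦ E₀[m(Z; β₀, (μ₁ + t h₁, μ₀ + t h₀, π + t h_π))] is differentiable at t = 0 with derivative 0, where the expectation is taken under the fixed measure P₀ and only the function arguments of m are varied. In other words, the AIPW estimating function is Neyman orthogonal at (β₀, (μ₁, μ₀, π)). -/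
/-! STATEMENT 13: Neyman orthogonality of the AIPW estimating function at
(β₀, (μ₁, μ₀, π)): the Gâteaux derivative of the expected estimating function under
the fixed measure P₀ in every essentially bounded nuisance direction (h₁, h₀, h_π)
vanishes at t = 0. -/

open MeasureTheory Filter Topology Set ENNReal

namespace ATE

variable {X : Type*} [MeasurableSpace X]

/-- An observation `z = (y, x, a)`: real outcome, covariates, binary treatment. -/
abbrev Obs (X : Type*) := ℝ × X × Bool

/-- `μa` is (a version of) the conditional outcome mean `E_P[Y | X = x, A = a]`:
it is measurable, integrable, and satisfies the defining conditional-expectation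
identity against all measurable sets of covariate values. -/
def IsCondMean (P : Measure (Obs X)) (a : Bool) (μa : X → ℝ) : Prop :=
  Measurable μa ∧ Integrable (fun z : Obs X => μa z.2.1) P ∧
  ∀ B : Set X, MeasurableSet B →
    ∫ z in {z : Obs X | z.2.1 ∈ B ∧ z.2.2 = a}, z.1 ∂P
      = ∫ z in {z : Obs X | z.2.1 ∈ B ∧ z.2.2 = a}, μa z.2.1 ∂P

/-- `pi` is (a version of) the propensity score `P(A = 1 | X = x)`. -/
def IsPropensity (P : Measure (Obs X)) (pi : X → ℝ) : Prop :=
  Measurable pi ∧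
  ∀ B : Set X, MeasurableSet B →
    (P {z : Obs X | z.2.1 ∈ B ∧ z.2.2 = true}).toReal
      = ∫ z in {z : Obs X | z.2.1 ∈ B}, pi z.2.1 ∂P

/-- The AIPW estimating function
`m(z; b, (μ1, μ0, π)) = (a/π(x))(y − μ1(x)) − ((1−a)/(1−π(x)))(y − μ0(x)) + μ1(x) − μ0(x) − b`. -/
noncomputable def aipw (μ1 μ0 pi : X → ℝ) (b : ℝ) (z : Obs X) : ℝ :=
  (if z.2.2 then (1:ℝ) else 0) / pi z.2.1 * (z.1 - μ1 z.2.1)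
    - (1 - if z.2.2 then (1:ℝ) else 0) / (1 - pi z.2.1) * (z.1 - μ0 z.2.1)
    + μ1 z.2.1 - μ0 z.2.1 - b

/-- If `f` has vanishing integral on every cylinder set `{z | z.2.1 ∈ B}`, then the
integral of `g(x) * f(z)` vanishes for every essentially bounded measurable `g`. -/
lemma key (P : Measure (Obs X)) [IsProbabilityMeasure P] {f : Obs X → ℝ} (hf : Integrable f P)
    (hf0 : ∀ B : Set X, MeasurableSet B → ∫ z in {z : Obs X | z.2.1 ∈ B}, f z ∂P = 0)
    {g : X → ℝ} (hg : Measurable g) {M : ℝ} (hgb : ∀ᵐ z ∂P, ‖g z.2.1‖ ≤ M) :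
    ∫ z, g z.2.1 * f z ∂P = 0 := by
  have hproj : Measurable (fun z : Obs X => z.2.1) := measurable_snd.fst
  set m' : MeasurableSpace (Obs X) := MeasurableSpace.comap (fun z : Obs X => z.2.1) inferInstance with hm'def
  have hm' : m' ≤ Prod.instMeasurableSpace := hproj.comap_le
  haveI : SigmaFinite (P.trim hm') := inferInstance
  have hgm' : Measurable[m'] (fun z : Obs X => g z.2.1) :=
    hg.comp (measurable_iff_comap_le.mpr le_rfl)
  have hce : (P[f | m']) =ᵐ[P] 0 := by
    have h0 : (fun _ : Obs X => (0:ℝ)) =ᵐ[P] P[f | m'] := by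
      refine ae_eq_condExp_of_forall_setIntegral_eq hm' hf ?_ ?_ ?_
      · intro s _ _
        exact ⟨aestronglyMeasurable_const, by simp [HasFiniteIntegral]⟩
      · rintro s ⟨B, hB, rfl⟩ _
        rw [integral_zero]
        exact (hf0 B hB).symm
      · exact StronglyMeasurable.aestronglyMeasurable
          (@stronglyMeasurable_const _ _ m' _ (0:ℝ))
    exact h0.symm
  have hmul : Integrable (fun z : Obs X => g z.2.1 * f z) P :=
    hf.bdd_mul ((hg.comp hproj).aestronglyMeasurable) hgb
  have hpull : P[(fun z : Obs X => g z.2.1) * f | m']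
      =ᵐ[P] (fun z : Obs X => g z.2.1) * (P[f | m']) :=
    condExp_mul_of_stronglyMeasurable_left hgm'.stronglyMeasurable hmul hf
  calc ∫ z, g z.2.1 * f z ∂P
      = ∫ z, ((fun z : Obs X => g z.2.1) * f) z ∂P := rfl
    _ = ∫ z, (P[(fun z : Obs X => g z.2.1) * f | m']) z ∂P := (integral_condExp hm').symm
    _ = ∫ z, g z.2.1 * (P[f | m']) z ∂P := integral_congr_ae hpull
    _ = ∫ z, g z.2.1 * (0:ℝ) ∂P := integral_congr_ae (hce.mono fun z hz => by simp only [Pi.zero_apply] at hz; simp [hz])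
    _ = 0 := by simp

lemma measInd (a : Bool) : Measurable (fun z : Obs X => if z.2.2 = a then (1:ℝ) else 0) := by
  have h : (fun z : Obs X => if z.2.2 = a then (1:ℝ) else 0)
      = ({z : Obs X | z.2.2 = a}).indicator (fun _ => 1) := by
    funext z; by_cases hz : z.2.2 = a <;> simp [Set.indicator_apply, hz, Set.mem_setOf_eq]
  rw [h]
  exact measurable_const.indicator (measurable_snd.snd (measurableSet_singleton a))

lemma measSetA (a : Bool) : MeasurableSet {z : Obs X | z.2.2 = a} :=
  measurable_snd.snd (measurableSet_singleton a)

lemma setInt_condMean (P : Measure (Obs X)) [IsProbabilityMeasure P]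
    {CY : ℝ} (hY : ∀ᵐ z ∂P, |z.1| ≤ CY) {a : Bool} {μa : X → ℝ} (h : IsCondMean P a μa)
    {B : Set X} (hB : MeasurableSet B) :
    ∫ z in {z : Obs X | z.2.1 ∈ B}, (if z.2.2 = a then (1:ℝ) else 0) * (z.1 - μa z.2.1) ∂P = 0 := by
  have hy : Integrable (fun z : Obs X => z.1) P :=
    Integrable.mono' (integrable_const CY) measurable_fst.aestronglyMeasurable
      (by simpa [Real.norm_eq_abs] using hY)
  have hfun : (fun z : Obs X => (if z.2.2 = a then (1:ℝ) else 0) * (z.1 - μa z.2.1))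
      = ({z : Obs X | z.2.2 = a}).indicator (fun z => z.1 - μa z.2.1) := by
    funext z; by_cases hz : z.2.2 = a <;> simp [Set.indicator_apply, hz, Set.mem_setOf_eq]
  rw [hfun, setIntegral_indicator (measSetA a)]
  have hset : {z : Obs X | z.2.1 ∈ B} ∩ {z : Obs X | z.2.2 = a}
      = {z : Obs X | z.2.1 ∈ B ∧ z.2.2 = a} := rfl
  rw [hset, integral_sub hy.integrableOn h.2.1.integrableOn, h.2.2 B hB, sub_self]

lemma setInt_prop (P : Measure (Obs X)) [IsProbabilityMeasure P]
    {pi : X → ℝ} (hpi : IsPropensity P pi)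
    (hpiint : Integrable (fun z : Obs X => pi z.2.1) P)
    {B : Set X} (hB : MeasurableSet B) :
    ∫ z in {z : Obs X | z.2.1 ∈ B}, ((if z.2.2 = true then (1:ℝ) else 0) - pi z.2.1) ∂P = 0 := by
  have hindint : Integrable (fun z : Obs X => if z.2.2 = true then (1:ℝ) else 0) P :=
    Integrable.mono' (integrable_const 1) (measInd true).aestronglyMeasurable
      (Eventually.of_forall fun z => by by_cases hz : z.2.2 = true <;> simp [hz])
  rw [integral_sub hindint.integrableOn hpiint.integrableOn]
  have hfun : (fun z : Obs X => if z.2.2 = true then (1:ℝ) else 0)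
      = ({z : Obs X | z.2.2 = true}).indicator (fun _ => 1) := by
    funext z; by_cases hz : z.2.2 = true <;> simp [Set.indicator_apply, hz, Set.mem_setOf_eq]
  rw [hfun, setIntegral_indicator (measSetA true)]
  have hset : {z : Obs X | z.2.1 ∈ B} ∩ {z : Obs X | z.2.2 = true}
      = {z : Obs X | z.2.1 ∈ B ∧ z.2.2 = true} := rfl
  rw [hset, setIntegral_const, smul_eq_mul, mul_one, measureReal_def, hpi.2 B hB, sub_self]

set_option maxHeartbeats 1000000 in
theorem aipw_neyman_orthogonal
    (P0 : Measure (Obs X)) [IsProbabilityMeasure P0]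
    (CY eps : ℝ) (heps : 0 < eps)
    (hY : ∀ᵐ z ∂P0, |z.1| ≤ CY)
    (μ : Bool → X → ℝ) (hμ : ∀ a, IsCondMean P0 a (μ a))
    (pi : X → ℝ) (hpi : IsPropensity P0 pi)
    (hpi_range : ∀ᵐ z ∂P0, pi z.2.1 ∈ Set.Icc eps (1 - eps))
    (h1 h0 hp : X → ℝ)
    (h1_meas : Measurable h1) (h0_meas : Measurable h0) (hp_meas : Measurable hp)
    (h1_bdd : ∃ M1 : ℝ, ∀ᵐ z ∂P0, |h1 z.2.1| ≤ M1)
    (h0_bdd : ∃ M0 : ℝ, ∀ᵐ z ∂P0, |h0 z.2.1| ≤ M0)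
    (hp_bdd : ∃ Mp : ℝ, ∀ᵐ z ∂P0, |hp z.2.1| ≤ Mp) :
    HasDerivAt (fun t : ℝ => ∫ z, aipw
        (fun x => μ true x + t * h1 x)
        (fun x => μ false x + t * h0 x)
        (fun x => pi x + t * hp x)
        (∫ z', (μ true z'.2.1 - μ false z'.2.1) ∂P0) z ∂P0)
      0 0 := by
  classical
  obtain ⟨M1, hM1⟩ := h1_bdd
  obtain ⟨M0, hM0⟩ := h0_bdd
  obtain ⟨Mp, hMp⟩ := hp_bdd
  set N1 := max M1 0 with hN1def
  set N0 := max M0 0 with hN0def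
  set Np := max Mp 0 with hNpdef
  have hN1 : 0 ≤ N1 := le_max_right _ _
  have hN0 : 0 ≤ N0 := le_max_right _ _
  have hNp : 0 ≤ Np := le_max_right _ _
  have hb1 : ∀ᵐ z ∂P0, |h1 z.2.1| ≤ N1 := hM1.mono fun z h => h.trans (le_max_left _ _)
  have hb0 : ∀ᵐ z ∂P0, |h0 z.2.1| ≤ N0 := hM0.mono fun z h => h.trans (le_max_left _ _)
  have hbp : ∀ᵐ z ∂P0, |hp z.2.1| ≤ Np := hMp.mono fun z h => h.trans (le_max_left _ _)
  set δ := eps / (2 * (Np + 1)) with hδdef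
  have hδpos : 0 < δ := by positivity
  set β := ∫ z', (μ true z'.2.1 - μ false z'.2.1) ∂P0 with hβdef
  set C := N1 * Np * (2 / eps) + N0 * Np * (2 / eps) with hCdef
  have hC : 0 ≤ C := by positivity
  have hμ1 := hμ true
  have hμ0 := hμ false
  have hpim : Measurable pi := hpi.1
  have hproj : Measurable (fun z : Obs X => z.2.1) := measurable_snd.fst
  have hy : Integrable (fun z : Obs X => z.1) P0 :=
    Integrable.mono' (integrable_const CY) measurable_fst.aestronglyMeasurable
      (by simpa [Real.norm_eq_abs] using hY)
  have hpiint : Integrable (fun z : Obs X => pi z.2.1) P0 :=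
    Integrable.mono' (integrable_const 1) (hpim.comp hproj).aestronglyMeasurable
      (hpi_range.mono fun z hz => by
        rw [Real.norm_eq_abs, abs_le]
        constructor <;> [linarith [hz.1]; linarith [hz.2]])
  have hindint : Integrable (fun z : Obs X => if z.2.2 = true then (1:ℝ) else 0) P0 :=
    Integrable.mono' (integrable_const 1) (measInd true).aestronglyMeasurable
      (Eventually.of_forall fun z => by by_cases hz : z.2.2 = true <;> simp [hz])
  have hδNp : δ * Np ≤ eps / 2 := by
    have e1 : δ * (Np + 1) = eps / 2 := by rw [hδdef]; field_simp
    nlinarith [hδpos.le]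
  -- main quantitative claim
  have claim : ∀ t : ℝ, |t| ≤ δ →
      |∫ z, aipw (fun x => μ true x + t * h1 x) (fun x => μ false x + t * h0 x)
          (fun x => pi x + t * hp x) β z ∂P0| ≤ C * t ^ 2 := by
    intro t ht
    -- good event with denominator bounds
    have hEd : ∀ᵐ z ∂P0, eps / 2 ≤ pi z.2.1 + t * hp z.2.1 ∧
        eps / 2 ≤ 1 - (pi z.2.1 + t * hp z.2.1) ∧
        |h1 z.2.1| ≤ N1 ∧ |h0 z.2.1| ≤ N0 ∧ |hp z.2.1| ≤ Np ∧
        pi z.2.1 ∈ Set.Icc eps (1 - eps) := by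
      filter_upwards [hpi_range, hb1, hb0, hbp] with z hπz h1z h0z hpz
      have habs : |t * hp z.2.1| ≤ eps / 2 := by
        rw [abs_mul]
        calc |t| * |hp z.2.1| ≤ δ * Np := by
              exact mul_le_mul ht hpz (abs_nonneg _) hδpos.le
          _ ≤ eps / 2 := hδNp
      have h1' := neg_abs_le (t * hp z.2.1)
      have h2' := le_abs_self (t * hp z.2.1)
      refine ⟨by linarith [hπz.1], by linarith [hπz.2], h1z, h0z, hpz, hπz⟩
    -- measurability
    have hd1measX : Measurable (fun x : X => pi x + t * hp x) :=
      hpim.add (measurable_const.mul hp_meas)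
    have hg1measX : Measurable (fun x : X => 1 / (pi x + t * hp x)) :=
      measurable_const.div hd1measX
    have hg0measX : Measurable (fun x : X => 1 / (1 - (pi x + t * hp x))) :=
      measurable_const.div (measurable_const.sub hd1measX)
    have hw1measX : Measurable (fun x : X => t * h1 x / (pi x + t * hp x)) :=
      (measurable_const.mul h1_meas).div hd1measX
    have hw0measX : Measurable (fun x : X => t * h0 x / (1 - (pi x + t * hp x))) :=
      (measurable_const.mul h0_meas).div (measurable_const.sub hd1measX)
    have hp6measX : Measurable (fun x : X => t * (h1 x - h0 x)
        - t * h1 x * pi x / (pi x + t * hp x)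
        + t * h0 x * (1 - pi x) / (1 - (pi x + t * hp x))) := by
      refine Measurable.add ?_ ?_
      · exact (measurable_const.mul (h1_meas.sub h0_meas)).sub
          (((measurable_const.mul h1_meas).mul hpim).div hd1measX)
      · exact ((measurable_const.mul h0_meas).mul (measurable_const.sub hpim)).div
          (measurable_const.sub hd1measX)
    -- a.e. bounds on nuisance factors
    have hg1b : ∀ᵐ z ∂P0, ‖1 / (pi z.2.1 + t * hp z.2.1)‖ ≤ 2 / eps := by
      filter_upwards [hEd] with z hz
      have hd1pos : 0 < pi z.2.1 + t * hp z.2.1 := by linarith [hz.1, heps]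
      rw [Real.norm_eq_abs, abs_of_pos (by positivity)]
      calc 1 / (pi z.2.1 + t * hp z.2.1) ≤ 1 / (eps / 2) :=
            one_div_le_one_div_of_le (by positivity) hz.1
        _ = 2 / eps := one_div_div _ _
    have hg0b : ∀ᵐ z ∂P0, ‖1 / (1 - (pi z.2.1 + t * hp z.2.1))‖ ≤ 2 / eps := by
      filter_upwards [hEd] with z hz
      have hd0pos : 0 < 1 - (pi z.2.1 + t * hp z.2.1) := by linarith [hz.2.1, heps]
      rw [Real.norm_eq_abs, abs_of_pos (by positivity)]
      calc 1 / (1 - (pi z.2.1 + t * hp z.2.1)) ≤ 1 / (eps / 2) :=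
            one_div_le_one_div_of_le (by positivity) hz.2.1
        _ = 2 / eps := one_div_div _ _
    have hw1b : ∀ᵐ z ∂P0, ‖t * h1 z.2.1 / (pi z.2.1 + t * hp z.2.1)‖ ≤ δ * N1 * (2 / eps) := by
      filter_upwards [hEd] with z hz
      have hd1pos : 0 < pi z.2.1 + t * hp z.2.1 := by linarith [hz.1, heps]
      rw [Real.norm_eq_abs, abs_div, abs_mul, abs_of_pos hd1pos]
      calc |t| * |h1 z.2.1| / (pi z.2.1 + t * hp z.2.1) ≤ (δ * N1) / (eps / 2) := by
            apply div_le_div₀ (by positivity) (mul_le_mul ht hz.2.2.1 (abs_nonneg _) hδpos.le)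
              (by positivity) hz.1
        _ = δ * N1 * (2 / eps) := by rw [div_div_eq_mul_div, mul_div_assoc]
    have hw0b : ∀ᵐ z ∂P0, ‖t * h0 z.2.1 / (1 - (pi z.2.1 + t * hp z.2.1))‖ ≤ δ * N0 * (2 / eps) := by
      filter_upwards [hEd] with z hz
      have hd0pos : 0 < 1 - (pi z.2.1 + t * hp z.2.1) := by linarith [hz.2.1, heps]
      rw [Real.norm_eq_abs, abs_div, abs_mul, abs_of_pos hd0pos]
      calc |t| * |h0 z.2.1| / (1 - (pi z.2.1 + t * hp z.2.1)) ≤ (δ * N0) / (eps / 2) := by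
            apply div_le_div₀ (by positivity) (mul_le_mul ht hz.2.2.2.1 (abs_nonneg _) hδpos.le)
              (by positivity) hz.2.1
        _ = δ * N0 * (2 / eps) := by rw [div_div_eq_mul_div, mul_div_assoc]
    -- the residual term and its a.e. bound
    have hbd : ∀ᵐ z ∂P0, ‖t * (h1 z.2.1 - h0 z.2.1)
        - t * h1 z.2.1 * pi z.2.1 / (pi z.2.1 + t * hp z.2.1)
        + t * h0 z.2.1 * (1 - pi z.2.1) / (1 - (pi z.2.1 + t * hp z.2.1))‖ ≤ C * t ^ 2 := by
      filter_upwards [hEd] with z hz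
      obtain ⟨hz1, hz2, hzb1, hzb0, hzbp, hzpi⟩ := hz
      have hd1pos : 0 < pi z.2.1 + t * hp z.2.1 := by linarith
      have hd0pos : 0 < 1 - (pi z.2.1 + t * hp z.2.1) := by linarith
      have key6 : t * (h1 z.2.1 - h0 z.2.1)
          - t * h1 z.2.1 * pi z.2.1 / (pi z.2.1 + t * hp z.2.1)
          + t * h0 z.2.1 * (1 - pi z.2.1) / (1 - (pi z.2.1 + t * hp z.2.1))
          = t ^ 2 * (h1 z.2.1 * hp z.2.1 / (pi z.2.1 + t * hp z.2.1)
              + h0 z.2.1 * hp z.2.1 / (1 - (pi z.2.1 + t * hp z.2.1))) := by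
        field_simp
        ring
      rw [Real.norm_eq_abs, key6, abs_mul, abs_pow]
      have e1 : |h1 z.2.1 * hp z.2.1 / (pi z.2.1 + t * hp z.2.1)| ≤ N1 * Np * (2 / eps) := by
        rw [abs_div, abs_mul, abs_of_pos hd1pos]
        calc |h1 z.2.1| * |hp z.2.1| / (pi z.2.1 + t * hp z.2.1) ≤ (N1 * Np) / (eps / 2) := by
              apply div_le_div₀ (by positivity) (mul_le_mul hzb1 hzbp (abs_nonneg _) hN1)
                (by positivity) hz1
          _ = N1 * Np * (2 / eps) := by rw [div_div_eq_mul_div, mul_div_assoc]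
      have e0 : |h0 z.2.1 * hp z.2.1 / (1 - (pi z.2.1 + t * hp z.2.1))| ≤ N0 * Np * (2 / eps) := by
        rw [abs_div, abs_mul, abs_of_pos hd0pos]
        calc |h0 z.2.1| * |hp z.2.1| / (1 - (pi z.2.1 + t * hp z.2.1)) ≤ (N0 * Np) / (eps / 2) := by
              apply div_le_div₀ (by positivity) (mul_le_mul hzb0 hzbp (abs_nonneg _) hN0)
                (by positivity) hz2
          _ = N0 * Np * (2 / eps) := by rw [div_div_eq_mul_div, mul_div_assoc]
      have habs2 : |t| ^ 2 = t ^ 2 := sq_abs t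
      have htri := abs_add_le (h1 z.2.1 * hp z.2.1 / (pi z.2.1 + t * hp z.2.1))
        (h0 z.2.1 * hp z.2.1 / (1 - (pi z.2.1 + t * hp z.2.1)))
      rw [habs2, hCdef]
      nlinarith [sq_nonneg t]
    -- integrability of all pieces
    have hf1int : Integrable (fun z : Obs X =>
        (if z.2.2 = true then (1:ℝ) else 0) * (z.1 - μ true z.2.1)) P0 :=
      (hy.sub (hμ1.2.1)).bdd_mul (c := 1) (measInd true).aestronglyMeasurable
        (Eventually.of_forall fun z => by by_cases hz : z.2.2 = true <;> simp [hz])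
    have hf0int : Integrable (fun z : Obs X =>
        (if z.2.2 = false then (1:ℝ) else 0) * (z.1 - μ false z.2.1)) P0 :=
      (hy.sub (hμ0.2.1)).bdd_mul (c := 1) (measInd false).aestronglyMeasurable
        (Eventually.of_forall fun z => by by_cases hz : z.2.2 = false <;> simp [hz])
    have hfπint : Integrable (fun z : Obs X =>
        (if z.2.2 = true then (1:ℝ) else 0) - pi z.2.1) P0 := hindint.sub hpiint
    have hp1int : Integrable (fun z : Obs X => (1 / (pi z.2.1 + t * hp z.2.1)) *
        ((if z.2.2 = true then (1:ℝ) else 0) * (z.1 - μ true z.2.1))) P0 :=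
      hf1int.bdd_mul ((hg1measX.comp hproj).aestronglyMeasurable) hg1b
    have hp2int : Integrable (fun z : Obs X => (1 / (1 - (pi z.2.1 + t * hp z.2.1))) *
        ((if z.2.2 = false then (1:ℝ) else 0) * (z.1 - μ false z.2.1))) P0 :=
      hf0int.bdd_mul ((hg0measX.comp hproj).aestronglyMeasurable) hg0b
    have hp3int : Integrable (fun z : Obs X => (t * h1 z.2.1 / (pi z.2.1 + t * hp z.2.1)) *
        ((if z.2.2 = true then (1:ℝ) else 0) - pi z.2.1)) P0 :=
      hfπint.bdd_mul ((hw1measX.comp hproj).aestronglyMeasurable) hw1b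
    have hp4int : Integrable (fun z : Obs X =>
        (t * h0 z.2.1 / (1 - (pi z.2.1 + t * hp z.2.1))) *
        ((if z.2.2 = true then (1:ℝ) else 0) - pi z.2.1)) P0 :=
      hfπint.bdd_mul ((hw0measX.comp hproj).aestronglyMeasurable) hw0b
    have hp5int : Integrable (fun z : Obs X => μ true z.2.1 - μ false z.2.1 - β) P0 :=
      (hμ1.2.1.sub hμ0.2.1).sub (integrable_const β)
    have hp6int : Integrable (fun z : Obs X => t * (h1 z.2.1 - h0 z.2.1)
        - t * h1 z.2.1 * pi z.2.1 / (pi z.2.1 + t * hp z.2.1)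
        + t * h0 z.2.1 * (1 - pi z.2.1) / (1 - (pi z.2.1 + t * hp z.2.1))) P0 :=
      Integrable.mono' (integrable_const (C * t ^ 2))
        ((hp6measX.comp hproj).aestronglyMeasurable) hbd
    -- pointwise decomposition
    have hdecomp : ∀ z : Obs X,
        aipw (fun x => μ true x + t * h1 x) (fun x => μ false x + t * h0 x)
          (fun x => pi x + t * hp x) β z
        = (1 / (pi z.2.1 + t * hp z.2.1)) *
            ((if z.2.2 = true then (1:ℝ) else 0) * (z.1 - μ true z.2.1))
          - (1 / (1 - (pi z.2.1 + t * hp z.2.1))) *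
            ((if z.2.2 = false then (1:ℝ) else 0) * (z.1 - μ false z.2.1))
          - (t * h1 z.2.1 / (pi z.2.1 + t * hp z.2.1)) *
            ((if z.2.2 = true then (1:ℝ) else 0) - pi z.2.1)
          - (t * h0 z.2.1 / (1 - (pi z.2.1 + t * hp z.2.1))) *
            ((if z.2.2 = true then (1:ℝ) else 0) - pi z.2.1)
          + (μ true z.2.1 - μ false z.2.1 - β)
          + (t * (h1 z.2.1 - h0 z.2.1)
              - t * h1 z.2.1 * pi z.2.1 / (pi z.2.1 + t * hp z.2.1)
              + t * h0 z.2.1 * (1 - pi z.2.1) / (1 - (pi z.2.1 + t * hp z.2.1))) := by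
      rintro ⟨y, x, a⟩
      cases a <;> simp [aipw] <;> ring
    -- the integral equals the integral of the residual
    have hieq : ∫ z, aipw (fun x => μ true x + t * h1 x) (fun x => μ false x + t * h0 x)
          (fun x => pi x + t * hp x) β z ∂P0
        = ∫ z, (t * (h1 z.2.1 - h0 z.2.1)
              - t * h1 z.2.1 * pi z.2.1 / (pi z.2.1 + t * hp z.2.1)
              + t * h0 z.2.1 * (1 - pi z.2.1) / (1 - (pi z.2.1 + t * hp z.2.1))) ∂P0 := by
      simp only [hdecomp]
      have hq1 : Integrable (fun z : Obs X => (1 / (pi z.2.1 + t * hp z.2.1)) *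
          ((if z.2.2 = true then (1:ℝ) else 0) * (z.1 - μ true z.2.1))
          - (1 / (1 - (pi z.2.1 + t * hp z.2.1))) *
          ((if z.2.2 = false then (1:ℝ) else 0) * (z.1 - μ false z.2.1))) P0 := hp1int.sub hp2int
      have hq2 : Integrable (fun z : Obs X => (1 / (pi z.2.1 + t * hp z.2.1)) *
          ((if z.2.2 = true then (1:ℝ) else 0) * (z.1 - μ true z.2.1))
          - (1 / (1 - (pi z.2.1 + t * hp z.2.1))) *
          ((if z.2.2 = false then (1:ℝ) else 0) * (z.1 - μ false z.2.1))
          - (t * h1 z.2.1 / (pi z.2.1 + t * hp z.2.1)) *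
          ((if z.2.2 = true then (1:ℝ) else 0) - pi z.2.1)) P0 := hq1.sub hp3int
      have hq3 : Integrable (fun z : Obs X => (1 / (pi z.2.1 + t * hp z.2.1)) *
          ((if z.2.2 = true then (1:ℝ) else 0) * (z.1 - μ true z.2.1))
          - (1 / (1 - (pi z.2.1 + t * hp z.2.1))) *
          ((if z.2.2 = false then (1:ℝ) else 0) * (z.1 - μ false z.2.1))
          - (t * h1 z.2.1 / (pi z.2.1 + t * hp z.2.1)) *
          ((if z.2.2 = true then (1:ℝ) else 0) - pi z.2.1)
          - (t * h0 z.2.1 / (1 - (pi z.2.1 + t * hp z.2.1))) *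
          ((if z.2.2 = true then (1:ℝ) else 0) - pi z.2.1)) P0 := hq2.sub hp4int
      have hq4 : Integrable (fun z : Obs X => (1 / (pi z.2.1 + t * hp z.2.1)) *
          ((if z.2.2 = true then (1:ℝ) else 0) * (z.1 - μ true z.2.1))
          - (1 / (1 - (pi z.2.1 + t * hp z.2.1))) *
          ((if z.2.2 = false then (1:ℝ) else 0) * (z.1 - μ false z.2.1))
          - (t * h1 z.2.1 / (pi z.2.1 + t * hp z.2.1)) *
          ((if z.2.2 = true then (1:ℝ) else 0) - pi z.2.1)
          - (t * h0 z.2.1 / (1 - (pi z.2.1 + t * hp z.2.1))) *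
          ((if z.2.2 = true then (1:ℝ) else 0) - pi z.2.1)
          + (μ true z.2.1 - μ false z.2.1 - β)) P0 := hq3.add hp5int
      rw [integral_add hq4 hp6int,
          integral_add hq3 hp5int,
          integral_sub hq2 hp4int,
          integral_sub hq1 hp3int,
          integral_sub hp1int hp2int]
      have z1 : ∫ z, (1 / (pi z.2.1 + t * hp z.2.1)) *
          ((if z.2.2 = true then (1:ℝ) else 0) * (z.1 - μ true z.2.1)) ∂P0 = 0 :=
        key P0 hf1int (fun B hB => setInt_condMean P0 hY hμ1 hB) hg1measX hg1b
      have z2 : ∫ z, (1 / (1 - (pi z.2.1 + t * hp z.2.1))) *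
          ((if z.2.2 = false then (1:ℝ) else 0) * (z.1 - μ false z.2.1)) ∂P0 = 0 :=
        key P0 hf0int (fun B hB => setInt_condMean P0 hY hμ0 hB) hg0measX hg0b
      have z3 : ∫ z, (t * h1 z.2.1 / (pi z.2.1 + t * hp z.2.1)) *
          ((if z.2.2 = true then (1:ℝ) else 0) - pi z.2.1) ∂P0 = 0 :=
        key P0 hfπint (fun B hB => setInt_prop P0 hpi hpiint hB) hw1measX hw1b
      have z4 : ∫ z, (t * h0 z.2.1 / (1 - (pi z.2.1 + t * hp z.2.1))) *
          ((if z.2.2 = true then (1:ℝ) else 0) - pi z.2.1) ∂P0 = 0 :=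
        key P0 hfπint (fun B hB => setInt_prop P0 hpi hpiint hB) hw0measX hw0b
      have z5 : ∫ z, (μ true z.2.1 - μ false z.2.1 - β) ∂P0 = 0 := by
        have hμsub : Integrable (fun z : Obs X => μ true z.2.1 - μ false z.2.1) P0 :=
          hμ1.2.1.sub hμ0.2.1
        rw [integral_sub hμsub (integrable_const β), integral_const,
          measureReal_def, measure_univ, ENNReal.toReal_one, one_smul, hβdef, sub_self]
      rw [z1, z2, z3, z4, z5]
      ring
    rw [hieq]
    have hnorm := norm_integral_le_of_norm_le (integrable_const (C * t ^ 2)) hbd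
    simpa [Real.norm_eq_abs, integral_const, measure_univ] using hnorm
  -- conclude
  have hF0 : (∫ z, aipw (fun x => μ true x + (0:ℝ) * h1 x)
      (fun x => μ false x + (0:ℝ) * h0 x) (fun x => pi x + (0:ℝ) * hp x) β z ∂P0) = 0 := by
    have h := claim 0 (by simpa using hδpos.le)
    refine abs_nonpos_iff.mp ?_
    simpa using h
  rw [hasDerivAt_iff_isLittleO]
  simp only [smul_zero, sub_zero, hF0]
  rw [Asymptotics.isLittleO_iff]
  intro c hc
  have hr : (0:ℝ) < min δ (c / (C + 1)) := lt_min hδpos (by positivity)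
  filter_upwards [Metric.closedBall_mem_nhds (0:ℝ) hr] with t htb
  rw [Metric.mem_closedBall, Real.dist_eq, sub_zero] at htb
  have ht1 : |t| ≤ δ := htb.trans (min_le_left _ _)
  have ht2 : |t| ≤ c / (C + 1) := htb.trans (min_le_right _ _)
  rw [Real.norm_eq_abs, Real.norm_eq_abs]
  calc |∫ z, aipw (fun x => μ true x + t * h1 x) (fun x => μ false x + t * h0 x)
          (fun x => pi x + t * hp x) β z ∂P0| ≤ C * t ^ 2 := claim t ht1
    _ = C * |t| * |t| := by rw [← sq_abs]; ring
    _ ≤ C * (c / (C + 1)) * |t| :=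
        mul_le_mul_of_nonneg_right (mul_le_mul_of_nonneg_left ht2 hC) (abs_nonneg t)
    _ ≤ c * |t| := by
        refine mul_le_mul_of_nonneg_right ?_ (abs_nonneg t)
        rw [mul_div_assoc', div_le_iff₀ (by positivity : (0:ℝ) < C + 1)]
        nlinarith

end ATE
end
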